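/- Let r be a twice differentiable real-valued function on an open interval I with 0 < r(t) for all t ∈ I, satisfying 4·r(t)·r''(t) − 4·r'(t)² − (1 − r(t)⁴) = 0 on I, and let κ ≥ 0 be a constant such that (1−r(t)²)²/(4 r(t)²) + (r'(t)/r(t))² = κ² on I. Then the function φ := 1/r − r satisfies φ''(t) + ((1/2)·(1/r(t)² + r(t)²) − κ²)·φ(t) = 0 for all t ∈ I. -/

import Mathlib

open Set

/-- The function `φ = 1/r − r` solves the first-mode Jacobi equation
`φ'' + ((1/2)(1/r² + r²) − κ²) φ = 0` along any positive solution of the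
catenoid profile equation with first-integral constant κ². -/
theorem jacobi_field_horizontal_dilation
    (a b : ℝ) (r r' r'' : ℝ → ℝ) (κ : ℝ) (hκ : 0 ≤ κ)
    (hderiv : ∀ t ∈ Set.Ioo a b, HasDerivAt r (r' t) t)
    (hderiv' : ∀ t ∈ Set.Ioo a b, HasDerivAt r' (r'' t) t)
    (hr : ∀ t ∈ Set.Ioo a b, 0 < r t)
    (hode : ∀ t ∈ Set.Ioo a b,
      4 * r t * r'' t - 4 * (r' t) ^ 2 - (1 - (r t) ^ 4) = 0)
    (hfirst : ∀ t ∈ Set.Ioo a b,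
      (1 - (r t) ^ 2) ^ 2 / (4 * (r t) ^ 2) + (r' t / r t) ^ 2 = κ ^ 2) :
    ∃ φ' φ'' : ℝ → ℝ,
      (∀ t ∈ Set.Ioo a b, HasDerivAt (fun s => 1 / r s - r s) (φ' t) t) ∧
      (∀ t ∈ Set.Ioo a b, HasDerivAt φ' (φ'' t) t) ∧
      (∀ t ∈ Set.Ioo a b,
        φ'' t + ((1 / 2) * (1 / (r t) ^ 2 + (r t) ^ 2) - κ ^ 2)
          * (1 / r t - r t) = 0) := by
  refine ⟨fun t => -(r' t) / (r t) ^ 2 - r' t,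
    fun t => (-(r'' t) * (r t) ^ 2 - -(r' t) * (2 * r t * r' t)) / ((r t) ^ 2) ^ 2 - r'' t,
    ?_, ?_, ?_⟩
  · intro t ht
    have hne : r t ≠ 0 := (hr t ht).ne'
    have h1 := ((hderiv t ht).fun_inv hne).fun_sub (hderiv t ht)
    simpa [one_div] using h1
  · intro t ht
    have hne : r t ≠ 0 := (hr t ht).ne'
    have hne2 : (r t) ^ 2 ≠ 0 := pow_ne_zero 2 hne
    have hg : HasDerivAt (fun s => (r s) ^ 2) (2 * r t * r' t) t := by
      have := (hderiv t ht).fun_pow 2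
      simpa [mul_comm, mul_assoc, mul_left_comm] using this
    exact ((hderiv' t ht).neg.div hg hne2).sub (hderiv' t ht)
  · intro t ht
    have hne : r t ≠ 0 := (hr t ht).ne'
    have h1 := hode t ht
    have h2 := hfirst t ht
    have hκ2 : κ ^ 2 = (1 - (r t) ^ 2) ^ 2 / (4 * (r t) ^ 2) + (r' t / r t) ^ 2 := h2.symm
    rw [hκ2]
    field_simp
    linear_combination (-2 * (1 + r t ^ 2)) * h1
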